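/- Let a = Σ_n a_n δ_n ∈ ℓ^1(ℕ) be nonzero with Σ_n a_n ≠ 0, and consider the module action of ℓ^1(ℕ, max) on ℓ^1(ℕ) given by δ_s · a = (Σ_{n=1}^s a_n) δ_s + Σ_{n=s+1}^∞ a_n δ_n. Suppose x = (x_n) ∈ c_0(ℕ) satisfies ⟨δ_s · a, x⟩ = ⟨a, x⟩ for all s ∈ ℕ, i.e., Σ_{n=1}^s a_n x_n = x_s Σ_{n=1}^s a_n for all s. Then ⟨a, x⟩ = Σ_n a_n x_n = 0. -/
import Mathlib


open Filter

/-- Let `a ∈ ℓ^1(ℕ)` be nonzero with `∑ aₙ ≠ 0`, and let `x ∈ c₀(ℕ)` satisfy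
`⟨δ_s · a, x⟩ = ⟨a, x⟩` for all `s`, i.e. `∑_{n ≤ s} aₙ xₙ = x_s ∑_{n ≤ s} aₙ` for all `s`
(the module action coming from convolution in `(ℕ, max)`).  Then `⟨a, x⟩ = ∑ aₙ xₙ = 0`. -/
theorem max_module_action_pairing_zero (a : ℕ → ℝ) (ha : Summable a) (hane : a ≠ 0)
    (hsum : ∑' n, a n ≠ 0)
    (x : ℕ → ℝ) (hx : Tendsto x atTop (nhds 0))
    (hrel : ∀ s : ℕ, ∑ n ∈ Finset.range (s + 1), a n * x n
      = x s * ∑ n ∈ Finset.range (s + 1), a n) :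
    ∑' n, a n * x n = 0 := by
  by_cases hs : Summable (fun n => a n * x n)
  · -- partial sums tend to the tsum
    have h1 : Tendsto (fun s => ∑ n ∈ Finset.range (s + 1), a n * x n) atTop
        (nhds (∑' n, a n * x n)) :=
      (hs.hasSum.tendsto_sum_nat).comp (tendsto_add_atTop_nat 1)
    have h2 : Tendsto (fun s => ∑ n ∈ Finset.range (s + 1), a n) atTop
        (nhds (∑' n, a n)) :=
      (ha.hasSum.tendsto_sum_nat).comp (tendsto_add_atTop_nat 1)
    have h3 : Tendsto (fun s => x s * ∑ n ∈ Finset.range (s + 1), a n) atTop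
        (nhds (0 * ∑' n, a n)) := hx.mul h2
    rw [zero_mul] at h3
    have := tendsto_nhds_unique h1 (by simpa only [hrel] using h3)
    exact this
  · exact tsum_eq_zero_of_not_summable hs
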